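/- The Hopf algebra D is not factorizable: the ℂ-linear map from the dual space D* to D sending f to (f ⊗ id)(R₂₁R) is not bijective, where R₂₁ = τ(R) with τ the flip of tensor factors. -/

import Mathlib

open scoped TensorProduct
open Finset

noncomputable section

namespace LogHennings

/-- `q = exp(iπ/p)`. -/
def qq (p : ℕ) : ℂ := Complex.exp ((Real.pi : ℂ) * Complex.I / (p : ℂ))

/-- `q^{1/2} = exp(iπ/(2p))`. -/
def qh (p : ℕ) : ℂ := Complex.exp ((Real.pi : ℂ) * Complex.I / (2 * (p : ℂ)))

/-- quantum integer `[m] = (q^m - q^{-m})/(q - q⁻¹)`. -/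
def qnum (p m : ℕ) : ℂ := ((qq p) ^ m - (qq p)⁻¹ ^ m) / (qq p - (qq p)⁻¹)

/-- quantum factorial `[m]! = [m][m-1]⋯[1]`. -/
def qfac (p : ℕ) : ℕ → ℂ
  | 0 => 1
  | m + 1 => qnum p (m + 1) * qfac p m

/-- Generators of the restricted quantum group `U`. -/
inductive UGen | E | F | K | Kinv

abbrev FU := FreeAlgebra ℂ UGen

def fE : FU := FreeAlgebra.ι ℂ UGen.E
def fF : FU := FreeAlgebra.ι ℂ UGen.F
def fK : FU := FreeAlgebra.ι ℂ UGen.K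
def fKinv : FU := FreeAlgebra.ι ℂ UGen.Kinv

/-- Defining relations of the restricted quantum group `U`. -/
inductive URel (p : ℕ) : FU → FU → Prop
  | Epow : URel p (fE ^ p) 0
  | Fpow : URel p (fF ^ p) 0
  | Kpow : URel p (fK ^ (2 * p)) 1
  | KKinv : URel p (fK * fKinv) 1
  | KinvK : URel p (fKinv * fK) 1
  | KE : URel p (fK * fE * fKinv) ((qq p) ^ 2 • fE)
  | KF : URel p (fK * fF * fKinv) (((qq p) ^ 2)⁻¹ • fF)
  | EF : URel p (fE * fF - fF * fE) ((qq p - (qq p)⁻¹)⁻¹ • (fK - fKinv))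

/-- The restricted quantum group `U = \bar U_q(sl2)`. -/
abbrev Uq (p : ℕ) := RingQuot (URel p)

def UE (p : ℕ) : Uq p := RingQuot.mkAlgHom ℂ (URel p) fE
def UF (p : ℕ) : Uq p := RingQuot.mkAlgHom ℂ (URel p) fF
def UK (p : ℕ) : Uq p := RingQuot.mkAlgHom ℂ (URel p) fK
def UKinv (p : ℕ) : Uq p := RingQuot.mkAlgHom ℂ (URel p) fKinv

/-- Generators of the braided extension `D`. -/
inductive DGen | e | phi | k | kinv

abbrev FD := FreeAlgebra ℂ DGen

def fe : FD := FreeAlgebra.ι ℂ DGen.e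
def fphi : FD := FreeAlgebra.ι ℂ DGen.phi
def fk : FD := FreeAlgebra.ι ℂ DGen.k
def fkinv : FD := FreeAlgebra.ι ℂ DGen.kinv

/-- Defining relations of `D`. -/
inductive DRel (p : ℕ) : FD → FD → Prop
  | epow : DRel p (fe ^ p) 0
  | phipow : DRel p (fphi ^ p) 0
  | kpow : DRel p (fk ^ (4 * p)) 1
  | kkinv : DRel p (fk * fkinv) 1
  | kinvk : DRel p (fkinv * fk) 1
  | ke : DRel p (fk * fe * fkinv) (qq p • fe)
  | kphi : DRel p (fk * fphi * fkinv) ((qq p)⁻¹ • fphi)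
  | ephi : DRel p (fe * fphi - fphi * fe)
      ((qq p - (qq p)⁻¹)⁻¹ • (fk ^ 2 - fkinv ^ 2))

/-- The braided extension `D` of `U`. -/
abbrev Dq (p : ℕ) := RingQuot (DRel p)

def De (p : ℕ) : Dq p := RingQuot.mkAlgHom ℂ (DRel p) fe
def Dphi (p : ℕ) : Dq p := RingQuot.mkAlgHom ℂ (DRel p) fphi
def Dk (p : ℕ) : Dq p := RingQuot.mkAlgHom ℂ (DRel p) fk
def Dkinv (p : ℕ) : Dq p := RingQuot.mkAlgHom ℂ (DRel p) fkinv

/-- The `R`-matrix of `D`. -/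
def Rmat (p : ℕ) : Dq p ⊗[ℂ] Dq p :=
  ((4 * (p : ℂ))⁻¹) •
    ∑ m ∈ range p, ∑ n ∈ range (4 * p), ∑ j ∈ range (4 * p),
      (((qq p - (qq p)⁻¹) ^ m / qfac p m) *
          (qh p) ^ ((m : ℤ) * ((m : ℤ) - 1) + 2 * (m : ℤ) * ((n : ℤ) - (j : ℤ))
            - (n : ℤ) * (j : ℤ))) •
        ((De p ^ m * Dk p ^ n) ⊗ₜ[ℂ] (Dphi p ^ m * Dk p ^ j))

/-- `R₂₁ = τ(R)`. -/
def R21 (p : ℕ) : Dq p ⊗[ℂ] Dq p := TensorProduct.comm ℂ (Dq p) (Dq p) (Rmat p)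

/-- The monodromy `M = R₂₁ R`. -/
def Mmat (p : ℕ) : Dq p ⊗[ℂ] Dq p := R21 p * Rmat p

/-- The ribbon element `r ∈ D`. -/
def rib (p : ℕ) : Dq p :=
  ((1 - Complex.I) / (2 * (Real.sqrt p : ℂ))) •
    ∑ m ∈ range p, ∑ j ∈ range (2 * p),
      (((qq p - (qq p)⁻¹) ^ m / qfac p m) *
          (qh p) ^ (-(m : ℤ) + 2 * (m : ℤ) * (j : ℤ) + ((j : ℤ) + (p : ℤ) + 1) ^ 2)) •
        (Dphi p ^ m * De p ^ m * Dk p ^ (2 * j))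

/-- The Drinfeld element `u = Σ S(β_i) α_i` for `R = Σ α_i ⊗ β_i`,
depending on a choice of antipode `S`. -/
def drinfeldU (p : ℕ) (S : Dq p →ₗ[ℂ] Dq p) : Dq p :=
  LinearMap.mul' ℂ (Dq p) (TensorProduct.map S LinearMap.id (R21 p))

/-- `Δ` takes the prescribed values on the generators of `U`. -/
def IsDeltaU (p : ℕ) (Δ : Uq p →ₐ[ℂ] Uq p ⊗[ℂ] Uq p) : Prop :=
  Δ (UE p) = 1 ⊗ₜ[ℂ] UE p + UE p ⊗ₜ[ℂ] UK p ∧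
  Δ (UF p) = UKinv p ⊗ₜ[ℂ] UF p + UF p ⊗ₜ[ℂ] 1 ∧
  Δ (UK p) = UK p ⊗ₜ[ℂ] UK p ∧
  Δ (UKinv p) = UKinv p ⊗ₜ[ℂ] UKinv p

/-- `ε` takes the prescribed values on the generators of `U`. -/
def IsCounitU (p : ℕ) (ε : Uq p →ₐ[ℂ] ℂ) : Prop :=
  ε (UE p) = 0 ∧ ε (UF p) = 0 ∧ ε (UK p) = 1 ∧ ε (UKinv p) = 1

/-- `S` is an algebra anti-homomorphism taking the prescribed values on the
generators of `U`. -/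
def IsAntipodeU (p : ℕ) (S : Uq p →ₗ[ℂ] Uq p) : Prop :=
  S 1 = 1 ∧ (∀ x y, S (x * y) = S y * S x) ∧
  S (UE p) = -(UE p * UKinv p) ∧ S (UF p) = -(UK p * UF p) ∧
  S (UK p) = UKinv p ∧ S (UKinv p) = UK p

/-- `Δ` takes the prescribed values on the generators of `D`. -/
def IsDeltaD (p : ℕ) (Δ : Dq p →ₐ[ℂ] Dq p ⊗[ℂ] Dq p) : Prop :=
  Δ (De p) = 1 ⊗ₜ[ℂ] De p + De p ⊗ₜ[ℂ] (Dk p ^ 2) ∧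
  Δ (Dphi p) = (Dkinv p ^ 2) ⊗ₜ[ℂ] Dphi p + Dphi p ⊗ₜ[ℂ] 1 ∧
  Δ (Dk p) = Dk p ⊗ₜ[ℂ] Dk p ∧
  Δ (Dkinv p) = Dkinv p ⊗ₜ[ℂ] Dkinv p

/-- `ε` takes the prescribed values on the generators of `D`. -/
def IsCounitD (p : ℕ) (ε : Dq p →ₐ[ℂ] ℂ) : Prop :=
  ε (De p) = 0 ∧ ε (Dphi p) = 0 ∧ ε (Dk p) = 1 ∧ ε (Dkinv p) = 1

/-- `S` is an algebra anti-homomorphism taking the prescribed values on the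
generators of `D`. -/
def IsAntipodeD (p : ℕ) (S : Dq p →ₗ[ℂ] Dq p) : Prop :=
  S 1 = 1 ∧ (∀ x y, S (x * y) = S y * S x) ∧
  S (De p) = -(De p * Dkinv p ^ 2) ∧ S (Dphi p) = -(Dk p ^ 2 * Dphi p) ∧
  S (Dk p) = Dkinv p ∧ S (Dkinv p) = Dk p

/-- `ι` takes the prescribed values `E ↦ e`, `F ↦ φ`, `K^{±1} ↦ k^{±2}`. -/
def IsIota (p : ℕ) (ι : Uq p →ₐ[ℂ] Dq p) : Prop :=
  ι (UE p) = De p ∧ ι (UF p) = Dphi p ∧ ι (UK p) = Dk p ^ 2 ∧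
  ι (UKinv p) = Dkinv p ^ 2

/-- `μ` takes the prescribed values on the PBW basis of `U`. -/
def IsMu (p : ℕ) (μ : Uq p →ₗ[ℂ] ℂ) : Prop :=
  ∀ m n l : ℕ, m < p → n < p → l < 2 * p →
    μ (UE p ^ m * UF p ^ n * UK p ^ l) =
      if m = p - 1 ∧ n = p - 1 ∧ l = p + 1 then
        -((Real.sqrt (2 / (p : ℝ)) : ℂ)) * (qfac p (p - 1)) ^ 2
      else 0

variable {A : Type*} [Ring A] [Algebra ℂ A]

/-- Coassociativity of a comultiplication. -/
def Coassoc (Δ : A →ₐ[ℂ] A ⊗[ℂ] A) : Prop :=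
  ∀ x, TensorProduct.assoc ℂ A A A
      (TensorProduct.map Δ.toLinearMap LinearMap.id (Δ x)) =
    TensorProduct.map LinearMap.id Δ.toLinearMap (Δ x)

/-- The counit axiom. -/
def CounitAxiom (Δ : A →ₐ[ℂ] A ⊗[ℂ] A) (ε : A →ₐ[ℂ] ℂ) : Prop :=
  (∀ x, TensorProduct.lid ℂ A
      (TensorProduct.map ε.toLinearMap LinearMap.id (Δ x)) = x) ∧
  (∀ x, TensorProduct.rid ℂ A
      (TensorProduct.map LinearMap.id ε.toLinearMap (Δ x)) = x)

/-- The antipode axiom. -/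
def AntipodeAxiom (Δ : A →ₐ[ℂ] A ⊗[ℂ] A) (ε : A →ₐ[ℂ] ℂ)
    (S : A →ₗ[ℂ] A) : Prop :=
  (∀ x, LinearMap.mul' ℂ A (TensorProduct.map S LinearMap.id (Δ x)) = ε x • 1) ∧
  (∀ x, LinearMap.mul' ℂ A (TensorProduct.map LinearMap.id S (Δ x)) = ε x • 1)

/-- `x ↦ x ⊗ 1`. -/
def e1 (p : ℕ) : Dq p →ₗ[ℂ] Dq p ⊗[ℂ] Dq p :=
  (TensorProduct.mk ℂ (Dq p) (Dq p)).flip 1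

/-- `x ↦ 1 ⊗ x`. -/
def e2 (p : ℕ) : Dq p →ₗ[ℂ] Dq p ⊗[ℂ] Dq p :=
  TensorProduct.mk ℂ (Dq p) (Dq p) 1

/-- The balancing element `g = K^{p+1}`. -/
def gU (p : ℕ) : Uq p := UK p ^ (p + 1)

/-- The span of commutators `[U,U]`. -/
def commSpan (p : ℕ) : Submodule ℂ (Uq p) :=
  Submodule.span ℂ {z : Uq p | ∃ x y : Uq p, z = x * y - y * x}

lemma qh_ne_zero (p : ℕ) : qh p ≠ 0 := Complex.exp_ne_zero _

lemma qh_zpow_eq_one_iff (p : ℕ) (hp : 0 < p) (t : ℤ) :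
    qh p ^ t = 1 ↔ (4 * (p : ℤ)) ∣ t := by
  have hpc : (p : ℂ) ≠ 0 := Nat.cast_ne_zero.2 hp.ne'
  have hπ : (Real.pi : ℂ) ≠ 0 := Complex.ofReal_ne_zero.2 Real.pi_ne_zero
  have hI := Complex.I_ne_zero
  rw [qh, ← Complex.exp_int_mul, Complex.exp_eq_one_iff]
  constructor
  · rintro ⟨n, hn⟩
    refine ⟨n, ?_⟩
    have h2 : (t : ℂ) = 4 * p * n := by
      field_simp at hn
      apply mul_right_cancel₀ (mul_ne_zero hπ Complex.I_ne_zero)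
      linear_combination (↑Real.pi * Complex.I) * hn
    exact_mod_cast h2
  · rintro ⟨n, rfl⟩
    exact ⟨n, by push_cast; field_simp; ring⟩

lemma qh_pow_4p (p : ℕ) (hp : 0 < p) : qh p ^ (4 * p) = 1 := by
  have := (qh_zpow_eq_one_iff p hp (4 * p)).2 ⟨1, by ring⟩
  rw [← zpow_natCast]
  push_cast
  exact this

lemma qh_pow_p (p : ℕ) (hp : 0 < p) : qh p ^ p = Complex.I := by
  have hpc : (p : ℂ) ≠ 0 := Nat.cast_ne_zero.2 hp.ne'
  rw [qh, ← Complex.exp_nat_mul]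
  rw [show (p : ℂ) * ((Real.pi : ℂ) * Complex.I / (2 * p)) = ↑Real.pi * Complex.I / 2 by
    field_simp]
  rw [show ((Real.pi : ℂ) * Complex.I / 2) = (↑Real.pi / 2) * Complex.I by ring,
    Complex.exp_mul_I]
  norm_cast
  simp [Real.cos_pi_div_two, Real.sin_pi_div_two]

lemma qh_pow_3p (p : ℕ) (hp : 0 < p) : qh p ^ (3 * p) = -Complex.I := by
  rw [mul_comm, pow_mul, qh_pow_p p hp]
  rw [pow_succ, Complex.I_sq]
  ring

lemma geom_qh (p : ℕ) (hp : 0 < p) (a : ℤ) (ha : ¬ (4 * (p : ℤ)) ∣ a) :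
    ∑ j ∈ Finset.range (4 * p), (qh p ^ a) ^ j = 0 := by
  have hz1 : qh p ^ a ≠ 1 := fun h => ha ((qh_zpow_eq_one_iff p hp a).1 h)
  rw [geom_sum_eq hz1]
  have h1 : (qh p ^ a) ^ (4 * p) = 1 := by
    rw [← zpow_natCast, ← zpow_mul, mul_comm, zpow_mul, zpow_natCast,
      qh_pow_4p p hp, one_zpow]
  rw [h1, sub_self, zero_div]

lemma double_sum (p r : ℕ) (hp : 0 < p) (hr : r * p < 4 * p) (v : ℕ → Dq p) :
    ∑ n ∈ Finset.range (4 * p), ∑ j ∈ Finset.range (4 * p),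
        ((qh p ^ (((r * p : ℕ) : ℤ) - (n : ℤ))) ^ j) • v n
      = ((4 * p : ℕ) : ℂ) • v (r * p) := by
  rw [Finset.sum_eq_single_of_mem (r * p) (Finset.mem_range.2 hr)]
  · simp only [sub_self, zpow_zero, one_pow, ← Finset.sum_smul, Finset.sum_const,
      Finset.card_range, nsmul_eq_mul, mul_one]
  · intro n hn hne
    rw [← Finset.sum_smul, geom_qh p hp _ ?_, zero_smul]
    rw [Finset.mem_range] at hn
    intro hdvd
    have h0 : ((r * p : ℕ) : ℤ) - (n : ℤ) = 0 :=
      Int.eq_zero_of_abs_lt_dvd hdvd (by rw [abs_lt]; omega)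
    omega

/-- generator values for the character `e,φ ↦ 0`, `k ↦ ι`, `k⁻¹ ↦ -ι`. -/
def chiGen (ι : ℂ) : DGen → ℂ
  | DGen.e => 0
  | DGen.phi => 0
  | DGen.k => ι
  | DGen.kinv => -ι

/-- the character `D → ℂ` determined by `ι` with `ι² = -1`. -/
def chi (p : ℕ) (hp : 0 < p) (ι : ℂ) (h2 : ι ^ 2 = -1) : Dq p →ₐ[ℂ] ℂ :=
  RingQuot.liftAlgHom ℂ ⟨FreeAlgebra.lift ℂ (chiGen ι), by
    intro x y h
    have hp' : p ≠ 0 := hp.ne'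
    induction h with
    | epow => simp [fe, chiGen, zero_pow hp']
    | phipow => simp [fphi, chiGen, zero_pow hp']
    | kpow =>
        simp only [map_pow, map_one, fk, FreeAlgebra.lift_ι_apply, chiGen]
        rw [show 4 * p = 2 * (2 * p) by ring, pow_mul, h2]
        simp [pow_mul]
    | kkinv => simp [fk, fkinv, chiGen]; linear_combination -h2
    | kinvk => simp [fk, fkinv, chiGen]; linear_combination -h2
    | ke => simp [fk, fe, fkinv, chiGen]
    | kphi => simp [fk, fphi, fkinv, chiGen]
    | ephi => simp [fe, fphi, fk, fkinv, chiGen, neg_sq]⟩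

lemma chi_e (p : ℕ) (hp : 0 < p) (ι : ℂ) (h2 : ι ^ 2 = -1) :
    chi p hp ι h2 (De p) = 0 := by
  rw [De, chi, RingQuot.liftAlgHom_mkAlgHom_apply]
  simp [fe, chiGen]

lemma chi_phi (p : ℕ) (hp : 0 < p) (ι : ℂ) (h2 : ι ^ 2 = -1) :
    chi p hp ι h2 (Dphi p) = 0 := by
  rw [Dphi, chi, RingQuot.liftAlgHom_mkAlgHom_apply]
  simp [fphi, chiGen]

lemma chi_k (p : ℕ) (hp : 0 < p) (ι : ℂ) (h2 : ι ^ 2 = -1) :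
    chi p hp ι h2 (Dk p) = ι := by
  rw [Dk, chi, RingQuot.liftAlgHom_mkAlgHom_apply]
  simp [fk, chiGen]

/-- `a ⊗ b ↦ χ(b) a`, as an algebra homomorphism. -/
def psi (p : ℕ) (χ : Dq p →ₐ[ℂ] ℂ) : Dq p ⊗[ℂ] Dq p →ₐ[ℂ] Dq p :=
  (Algebra.TensorProduct.rid ℂ ℂ (Dq p)).toAlgHom.comp
    (Algebra.TensorProduct.map (AlgHom.id ℂ (Dq p)) χ)

lemma psi_tmul (p : ℕ) (χ : Dq p →ₐ[ℂ] ℂ) (a b : Dq p) :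
    psi p χ (a ⊗ₜ[ℂ] b) = χ b • a := by
  simp [psi]

lemma bridge (p : ℕ) (χ : Dq p →ₐ[ℂ] ℂ) (f : Module.Dual ℂ (Dq p))
    (x : Dq p ⊗[ℂ] Dq p) :
    χ (TensorProduct.lid ℂ (Dq p) (TensorProduct.map f LinearMap.id x))
      = f (psi p χ x) := by
  induction x with
  | zero => simp
  | tmul a b => simp [psi_tmul, mul_comm]
  | add x y hx hy => simp [map_add, hx, hy]

lemma scal (p r : ℕ) : ∀ n j : ℕ,
    qh p ^ (-((n : ℤ) * (j : ℤ))) * (qh p ^ (r * p)) ^ j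
      = (qh p ^ (((r * p : ℕ) : ℤ) - (n : ℤ))) ^ j := by
  intro n j
  have hq := qh_ne_zero p
  rw [← pow_mul, ← zpow_natCast (qh p) (r * p * j), ← zpow_add₀ hq,
    ← zpow_natCast (qh p ^ (((r * p : ℕ) : ℤ) - (n : ℤ))) j, ← zpow_mul]
  congr 1
  push_cast
  ring

lemma psi_Rmat (p : ℕ) (hp : 2 ≤ p) (χ : Dq p →ₐ[ℂ] ℂ) (r : ℕ)
    (hr : r * p < 4 * p)
    (hφ : χ (Dphi p) = 0) (hk : χ (Dk p) = qh p ^ (r * p)) :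
    psi p χ (Rmat p) = Dk p ^ (r * p) := by
  have hp0 : 0 < p := by omega
  have h4p : ((4 * p : ℕ) : ℂ) ≠ 0 := Nat.cast_ne_zero.2 (by omega)
  rw [Rmat, map_smul, map_sum,
    Finset.sum_eq_single_of_mem 0 (Finset.mem_range.2 hp0)]
  · simp only [map_sum, map_smul, psi_tmul, map_mul, map_pow, hφ, hk,
      pow_zero, one_mul, Nat.cast_zero, zero_mul, mul_zero, zero_add, zero_sub,
      qfac, div_one, one_smul, smul_smul]
    rw [Finset.sum_congr rfl (fun n _ => Finset.sum_congr rfl (fun j _ => by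
      rw [scal p r n j]))]
    rw [double_sum p r hp0 hr (fun n => Dk p ^ n), smul_smul]
    rw [show ((4 * (p : ℂ))⁻¹ * ((4 * p : ℕ) : ℂ)) = 1 by
      push_cast
      exact inv_mul_cancel₀ (by exact_mod_cast h4p)]
    rw [one_smul]
  · intro m _ hm
    rw [map_sum]
    refine Finset.sum_eq_zero fun n _ => ?_
    rw [map_sum]
    refine Finset.sum_eq_zero fun j _ => ?_
    rw [map_smul, psi_tmul, map_mul, map_pow, hφ, zero_pow hm, zero_mul,
      zero_smul, smul_zero]

lemma psi_R21 (p : ℕ) (hp : 2 ≤ p) (χ : Dq p →ₐ[ℂ] ℂ) (r : ℕ)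
    (hr : r * p < 4 * p)
    (hE : χ (De p) = 0) (hk : χ (Dk p) = qh p ^ (r * p)) :
    psi p χ (R21 p) = Dk p ^ (r * p) := by
  have hp0 : 0 < p := by omega
  have h4p : ((4 * p : ℕ) : ℂ) ≠ 0 := Nat.cast_ne_zero.2 (by omega)
  rw [R21, Rmat, map_smul, map_sum, map_smul, map_sum,
    Finset.sum_eq_single_of_mem 0 (Finset.mem_range.2 hp0)]
  · simp only [map_sum, map_smul, TensorProduct.comm_tmul, psi_tmul, map_mul,
      map_pow, hE, hk,
      pow_zero, one_mul, Nat.cast_zero, zero_mul, mul_zero, zero_add, zero_sub,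
      qfac, div_one, one_smul, smul_smul]
    rw [Finset.sum_comm]
    rw [Finset.sum_congr rfl (fun j _ => Finset.sum_congr rfl (fun n _ => by
      rw [mul_comm (n : ℤ) (j : ℤ), scal p r j n]))]
    rw [double_sum p r hp0 hr (fun j => Dk p ^ j), smul_smul]
    rw [show ((4 * (p : ℂ))⁻¹ * ((4 * p : ℕ) : ℂ)) = 1 by
      push_cast
      exact inv_mul_cancel₀ (by exact_mod_cast h4p)]
    rw [one_smul]
  · intro m _ hm
    simp only [map_sum, map_smul, TensorProduct.comm_tmul, psi_tmul, map_mul,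
      map_pow, hE, zero_pow hm, zero_mul, zero_smul, smul_zero,
      Finset.sum_const_zero]

end LogHennings
open LogHennings in
/-- `D` is not factorizable: the map `D* → D`, `f ↦ (f ⊗ id)(R₂₁R)`, is not
bijective. -/
theorem D_not_factorizable (p : ℕ) (hp : 2 ≤ p) :
    ¬ Function.Bijective (fun f : Module.Dual ℂ (Dq p) =>
        TensorProduct.lid ℂ (Dq p)
          (TensorProduct.map f LinearMap.id (Mmat p))) := by
  intro hb
  have hp0 : 0 < p := by omega
  have h2I : Complex.I ^ 2 = -1 := Complex.I_sq
  have h2I' : (-Complex.I) ^ 2 = -1 := by rw [neg_sq]; exact Complex.I_sq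
  set χ1 := chi p hp0 Complex.I h2I with hχ1
  set χ3 := chi p hp0 (-Complex.I) h2I' with hχ3
  have hk1 : χ1 (Dk p) = qh p ^ (1 * p) := by
    rw [hχ1, chi_k, one_mul, qh_pow_p p hp0]
  have hk3 : χ3 (Dk p) = qh p ^ (3 * p) := by
    rw [hχ3, chi_k, qh_pow_3p p hp0]
  have hk4 : Dk p ^ (4 * p) = 1 := by
    have h := RingQuot.mkAlgHom_rel ℂ (DRel.kpow (p := p))
    rw [map_pow, map_one] at h
    rw [Dk]
    exact h
  have hM1 : psi p χ1 (Mmat p) = Dk p ^ (2 * p) := by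
    rw [Mmat, map_mul,
      psi_R21 p hp χ1 1 (by omega) (chi_e p hp0 _ _) hk1,
      psi_Rmat p hp χ1 1 (by omega) (chi_phi p hp0 _ _) hk1, ← pow_add]
    congr 1
    omega
  have hM3 : psi p χ3 (Mmat p) = Dk p ^ (2 * p) := by
    rw [Mmat, map_mul,
      psi_R21 p hp χ3 3 (by omega) (chi_e p hp0 _ _) hk3,
      psi_Rmat p hp χ3 3 (by omega) (chi_phi p hp0 _ _) hk3, ← pow_add,
      show 3 * p + 3 * p = 2 * p + 4 * p by omega, pow_add, hk4, mul_one]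
  obtain ⟨f, hf⟩ := hb.2 (Dk p)
  have hf' : TensorProduct.lid ℂ (Dq p)
      (TensorProduct.map f LinearMap.id (Mmat p)) = Dk p := hf
  have b1 := bridge p χ1 f (Mmat p)
  have b3 := bridge p χ3 f (Mmat p)
  rw [hf', hM1, hχ1, chi_k] at b1
  rw [hf', hM3, hχ3, chi_k] at b3
  exact Complex.I_ne_zero (by linear_combination (b1.trans b3.symm) / 2)
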